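/- arXiv:1309.6246 — 5 statements merged into one kernel-verified Lean document; each statement's English description precedes it below -/
import Mathlib

section
/- Let (X,Σ,μ) be a standard (Lebesgue) probability space and T an invertible measure-preserving transformation of X that is aperiodic, i.e. μ({x ∈ X : T^n x = x for some n ≥ 1}) = 0. Fix m ∈ ℕ and define h(x) = log₂(1+x), let h^{(k)} denote the k-fold composition of h, and set g_m(x) = x·h^{(m+1)}(−log₂ x) for x ∈ (0,1], g_m(0) = 0; also let log₂^{(k)} denote the k-fold iterated base-2 logarithm. Let φ:[0,∞) → (0,∞) be an increasing function with ∫₁^∞ φ(x)/x² dx < ∞. Then for every binary partition P = {E, X∖E} with 0 < μ(E) < 1 such that max{μ(A) : A ∈ P_n} → 0 as n → ∞, one has limsup_{n→∞} H(g_m, P_n)/φ(log₂^{(m+2)} n) = ∞ (the limsup being taken over those n for which log₂^{(m+2)} n is defined and nonnegative). -/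
open MeasureTheory Filter Set
open scoped ENNReal

/-- The atom of the join partition `P ∨ T⁻¹P ∨ ⋯ ∨ T^{-(n-1)}P` of the binary partition
`{E, Eᶜ}` corresponding to the 01-name `s`. -/
def cyl {X : Type*} (T : X → X) (E : Set X) (n : ℕ) (s : Fin n → Bool) : Set X :=
  {x | ∀ i : Fin n, (T^[(i : ℕ)] x ∈ E ↔ s i = true)}

/-- The `g`-entropy `H(g, P_n)` of the join partition `P_n` of the binary partition
`P = {E, Eᶜ}`. -/
noncomputable def binEnt {X : Type*} [MeasurableSpace X] (μ : Measure X)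
    (T : X → X) (g : ℝ → ℝ) (E : Set X) (n : ℕ) : ℝ :=
  ∑ s : Fin n → Bool, g ((μ (cyl T E n s)).toReal)

/-- `h(x) = log₂(1 + x)`. -/
noncomputable def hlog : ℝ → ℝ := fun x => Real.logb 2 (1 + x)

/-- `g_m(x) = x · h^{(m+1)}(−log₂ x)` for `x ∈ (0,1]`, `g_m(0) = 0`,
where `h^{(k)}` is the `k`-fold composition of `h(x) = log₂(1+x)`. -/
noncomputable def gm (m : ℕ) : ℝ → ℝ := fun x =>
  if x = 0 then 0 else x * (hlog^[m + 1] (-Real.logb 2 x))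

/-- The `k`-fold iterated base-2 logarithm. -/
noncomputable def iterLog (k : ℕ) (x : ℝ) : ℝ := (fun y => Real.logb 2 y)^[k] x


namespace SEAux


/-- `p` is a period of the length-`n` prefix of `w`. -/
def Per (w : ℕ → Bool) (p n : ℕ) : Prop := ∀ i, i + p < n → w (i + p) = w i

/-- minimal period of the length-`n` prefix. -/
noncomputable def minper (w : ℕ → Bool) (n : ℕ) : ℕ :=
  @Nat.find (fun p => 1 ≤ p ∧ Per w p n) (Classical.decPred _)
    ⟨n + 1, by omega, fun i h => absurd h (by omega)⟩

lemma minper_spec (w : ℕ → Bool) (n : ℕ) :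
    1 ≤ minper w n ∧ Per w (minper w n) n :=
  @Nat.find_spec (fun p => 1 ≤ p ∧ Per w p n) (Classical.decPred _) _

lemma minper_pos (w : ℕ → Bool) (n : ℕ) : 1 ≤ minper w n := (minper_spec w n).1

lemma minper_per (w : ℕ → Bool) (n : ℕ) : Per w (minper w n) n := (minper_spec w n).2

lemma minper_min {w : ℕ → Bool} {n p : ℕ} (h1 : 1 ≤ p) (hp : Per w p n) :
    minper w n ≤ p :=
  @Nat.find_min' (fun p => 1 ≤ p ∧ Per w p n) (Classical.decPred _) _ _ ⟨h1, hp⟩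

lemma not_per_of_lt_minper {w : ℕ → Bool} {n d : ℕ} (h1 : 1 ≤ d) (hd : d < minper w n) :
    ¬ Per w d n := fun hper => absurd (minper_min h1 hper) (by omega)

lemma minper_mono (w : ℕ → Bool) {m n : ℕ} (h : m ≤ n) : minper w m ≤ minper w n := by
  refine minper_min (minper_pos w n) ?_
  intro i hi
  exact minper_per w n i (by omega)

/-- key jump lemma: if the minimal period strictly increases from `s` to `s+1`, then
the new period plus the old one exceeds `s`. -/
lemma minper_jump (w : ℕ → Bool) (s : ℕ)
    (h : minper w s < minper w (s + 1)) : s < minper w (s + 1) + minper w s := by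
  by_contra hc
  push_neg at hc
  set q := minper w s with hq
  set Q := minper w (s + 1) with hQ
  -- show `Per w q (s+1)`, contradicting minimality of Q
  have hQs : Q + q ≤ s := hc
  have hper : Per w q (s + 1) := by
    intro i hi
    rcases lt_or_ge (i + q) s with hlt | hge
    · exact minper_per w s i hlt
    · have hiq : i + q = s := by omega
      -- i = s - q
      have h1 : w s = w (s - Q) := by
        have := minper_per w (s + 1) (s - Q) (by omega)
        rw [Nat.sub_add_cancel (by omega)] at this
        exact this
      have h2 : w (s - q) = w (s - q - Q) := by
        have := minper_per w (s + 1) (s - q - Q) (by omega)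
        rw [show s - q - Q + Q = s - q by omega] at this
        exact this
      have h3 : w (s - Q) = w (s - q - Q) := by
        have := minper_per w s (s - q - Q) (by omega)
        rw [show s - q - Q + q = s - Q by omega] at this
        exact this
      have : w s = w (s - q) := by rw [h1, h3, ← h2]
      have hi' : i = s - q := by omega
      rw [hiq, hi']
      exact this
  exact absurd (minper_min (minper_pos w s) hper) (by omega)

/-- If along all large dyadic scales the minimal period is tiny, the whole
sequence is periodic. -/
lemma periodic_of_small (w : ℕ → Bool) (J : ℕ)
    (h : ∀ j, J ≤ j → 8 * minper w (2 ^ j) < 2 ^ j) :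
    ∃ p, 1 ≤ p ∧ ∀ i, w (i + p) = w i := by
  -- no jumps at any s ≥ 2^J
  have hstep : ∀ s, 2 ^ J ≤ s → minper w (s + 1) = minper w s := by
    intro s hs
    by_contra hne
    have hlt : minper w s < minper w (s + 1) :=
      lt_of_le_of_ne (minper_mono w (by omega)) (Ne.symm hne)
    -- find j with s < 2^j ≤ 2 s
    have hs1 : 1 ≤ s := le_trans (Nat.one_le_two_pow) hs
    set j := Nat.log 2 s + 1 with hj
    have hjs : s < 2 ^ j := Nat.lt_pow_succ_log_self (by norm_num) s
    have hjs2 : 2 ^ j ≤ 2 * s := by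
      have := Nat.pow_log_le_self 2 (x := s) (by omega)
      calc 2 ^ j = 2 * 2 ^ Nat.log 2 s := by rw [hj]; ring
      _ ≤ 2 * s := by omega
    have hJj : J ≤ j := by
      by_contra hJj
      push_neg at hJj
      have : 2 ^ j ≤ 2 ^ J := Nat.pow_le_pow_right (by norm_num) (by omega)
      omega
    have hsmall := h j hJj
    have h1 : minper w s ≤ minper w (2 ^ j) := minper_mono w (by omega)
    have h2 : minper w (s + 1) ≤ minper w (2 ^ j) := minper_mono w (by omega)
    have := minper_jump w s hlt
    omega
  have hconst : ∀ n, 2 ^ J ≤ n → minper w n = minper w (2 ^ J) := by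
    intro n hn
    obtain ⟨d, rfl⟩ : ∃ d, n = 2 ^ J + d := ⟨n - 2 ^ J, by omega⟩
    induction d with
    | zero => rfl
    | succ d ih =>
        rw [show 2 ^ J + (d + 1) = (2 ^ J + d) + 1 by omega, hstep _ (by omega),
          ih (by omega)]
  refine ⟨minper w (2 ^ J), minper_pos _ _, fun i => ?_⟩
  set p := minper w (2 ^ J) with hp
  have hn : 2 ^ J ≤ 2 ^ J + i + p + 1 := by omega
  have h1 : Per w p (2 ^ J + i + p + 1) := by
    have := minper_per w (2 ^ J + i + p + 1)
    rwa [hconst _ hn] at this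
  exact h1 i (by have := Nat.zero_le (2 ^ J); omega)

/-- iterated base-2 exponential -/
def E2 : ℕ → ℕ → ℕ
  | 0, a => a
  | t + 1, a => 2 ^ E2 t a

lemma E2_ge (t a : ℕ) : a ≤ E2 t a := by
  induction t with
  | zero => simp [E2]
  | succ t ih => exact le_trans ih (le_trans (Nat.le_of_lt Nat.lt_two_pow_self) (le_refl _))

lemma E2_strictMono (t : ℕ) : StrictMono (E2 t) := by
  induction t with
  | zero => exact fun a b h => h
  | succ t ih => exact fun a b h => Nat.pow_lt_pow_right (by norm_num) (ih h)




lemma hlog_nonneg {y : ℝ} (hy : 0 ≤ y) : 0 ≤ hlog y :=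
  Real.logb_nonneg (by norm_num) (by linarith)

lemma hlog_mono {a b : ℝ} (ha : 0 ≤ a) (hab : a ≤ b) : hlog a ≤ hlog b :=
  Real.logb_le_logb_of_le (by norm_num) (by linarith) (by linarith)

lemma hiter_nonneg (t : ℕ) {y : ℝ} (hy : 0 ≤ y) : 0 ≤ hlog^[t] y := by
  induction t generalizing y with
  | zero => simpa
  | succ t ih => rw [Function.iterate_succ_apply]; exact ih (hlog_nonneg hy)

lemma hiter_mono (t : ℕ) {a b : ℝ} (ha : 0 ≤ a) (hab : a ≤ b) :
    hlog^[t] a ≤ hlog^[t] b := by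
  induction t generalizing a b with
  | zero => simpa
  | succ t ih =>
      rw [Function.iterate_succ_apply, Function.iterate_succ_apply]
      exact ih (hlog_nonneg ha) (hlog_mono ha hab)

lemma logb_two_pow (c : ℕ) : Real.logb 2 ((2 : ℝ) ^ c) = (c : ℝ) := by
  rw [Real.logb_pow, Real.logb_self_eq_one (by norm_num)]; ring

/-- main lower bound: `hlog^[t] (E2 t a - 4) ≥ a - 4`. -/
lemma hiter_lb (t : ℕ) (a : ℕ) (ha : 4 ≤ a) :
    (a : ℝ) - 4 ≤ hlog^[t] ((E2 t a : ℝ) - 4) := by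
  induction t with
  | zero => simp [E2]
  | succ t ih =>
      set B := E2 t a with hB
      have hB4 : 4 ≤ B := le_trans ha (E2_ge t a)
      have hcast : ((E2 (t + 1) a : ℕ) : ℝ) = (2 : ℝ) ^ B := by
        simp [E2, hB]
      rw [Function.iterate_succ_apply, hcast]
      have hkey : ((B : ℝ) - 4) ≤ hlog ((2 : ℝ) ^ B - 4) := by
        have h1 : hlog ((2 : ℝ) ^ B - 4) = Real.logb 2 ((2 : ℝ) ^ B - 3) := by
          unfold hlog; ring_nf
        have h2 : (2 : ℝ) ^ (B - 4 : ℕ) ≤ (2 : ℝ) ^ B - 3 := by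
          have hn : (2 : ℕ) ^ (B - 4) * 16 = 2 ^ B := by
            rw [show (16 : ℕ) = 2 ^ 4 by norm_num, ← pow_add]
            congr 1; omega
          have hn2 : (2 : ℕ) ^ (B - 4) + 3 ≤ 2 ^ B := by nlinarith [Nat.one_le_two_pow (n := B - 4)]
          have := Nat.one_le_two_pow (n := B - 4)
          have hr : ((2:ℕ) ^ (B-4) : ℝ) + 3 ≤ ((2:ℕ) ^ B : ℝ) := by exact_mod_cast hn2
          push_cast at hr ⊢
          linarith
        have h3 : Real.logb 2 ((2:ℝ) ^ (B - 4 : ℕ)) ≤ Real.logb 2 ((2 : ℝ) ^ B - 3) :=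
          Real.logb_le_logb_of_le (by norm_num) (pow_pos (by norm_num) _) h2
        rw [logb_two_pow] at h3
        have : ((B - 4 : ℕ) : ℝ) = (B : ℝ) - 4 := by push_cast [Nat.cast_sub hB4]; ring
        rw [h1]; linarith [h3, this.symm.le]
      have h0 : (0 : ℝ) ≤ (B : ℝ) - 4 := by
        have : (4 : ℝ) ≤ (B : ℝ) := by exact_mod_cast hB4
        linarith
      calc (a : ℝ) - 4 ≤ hlog^[t] ((B : ℝ) - 4) := ih
        _ ≤ hlog^[t] (hlog ((2 : ℝ) ^ B - 4)) := hiter_mono t h0 hkey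
        _ = hlog^[t] (hlog ((2 : ℝ) ^ (B : ℕ) - 4)) := rfl

lemma iterlog_E2 (t : ℕ) (b : ℕ) :
    (fun y => Real.logb 2 y)^[t] ((E2 t b : ℕ) : ℝ) = (b : ℝ) := by
  induction t with
  | zero => simp [E2]
  | succ t ih =>
      rw [Function.iterate_succ_apply]
      have : Real.logb 2 ((E2 (t+1) b : ℕ) : ℝ) = ((E2 t b : ℕ) : ℝ) := by
        have : ((E2 (t+1) b : ℕ) : ℝ) = (2 : ℝ) ^ (E2 t b) := by simp [E2]
        rw [this, logb_two_pow]
      rw [this, ih]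

lemma iterLog_pow_E2 (m : ℕ) (c : ℕ) :
    iterLog (m + 2) (((2 : ℕ) ^ (E2 (m + 1) c) : ℕ) : ℝ) = (c : ℝ) := by
  unfold iterLog
  rw [Function.iterate_succ_apply]
  have h1 : Real.logb 2 (((2:ℕ) ^ (E2 (m+1) c) : ℕ) : ℝ) = ((E2 (m+1) c : ℕ) : ℝ) := by
    push_cast
    rw [logb_two_pow]
  rw [h1, iterlog_E2]


section MeasPart
set_option linter.unusedSectionVars false
set_option linter.unusedVariables false

variable {X : Type*} [MeasurableSpace X] (μ : Measure X) [IsProbabilityMeasure μ]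
  (T : X → X) (E : Set X)

open Classical in
noncomputable def nm {X : Type*} (T : X → X) (E : Set X) (x : X) (i : ℕ) : Bool :=
  decide (T^[i] x ∈ E)


lemma nm_eq_true_iff {x : X} {i : ℕ} : nm T E x i = true ↔ T^[i] x ∈ E := by
  simp [nm]

lemma mem_cyl_iff {x : X} {n : ℕ} {s : Fin n → Bool} :
    x ∈ cyl T E n s ↔ ∀ i : Fin n, nm T E x i = s i := by
  unfold cyl
  constructor
  · intro h i
    have := h i
    cases hsi : s i
    · simp [hsi] at this
      simp [nm, this]
    · simp [hsi] at this
      simp [nm, this]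
  · intro h i
    have := h i
    cases hsi : s i
    · rw [hsi] at this
      simp [nm] at this
      simp [this]
    · rw [hsi] at this
      simp [nm] at this
      simp [this]

lemma mem_cyl_self (x : X) (n : ℕ) : x ∈ cyl T E n (fun i => nm T E x i) := by
  rw [mem_cyl_iff]
  intro i; rfl

lemma name_eq_of_mem {x : X} {n : ℕ} {s : Fin n → Bool} (h : x ∈ cyl T E n s)
    (i : Fin n) : s i = nm T E x i := ((mem_cyl_iff T E).1 h i).symm

lemma cyl_measurable (hT : Measurable T) (hE : MeasurableSet E) (n : ℕ)
    (s : Fin n → Bool) : MeasurableSet (cyl T E n s) := by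
  have : cyl T E n s = ⋂ i : Fin n, (T^[(i:ℕ)]) ⁻¹' (if s i = true then E else Eᶜ) := by
    ext x
    simp only [cyl, mem_setOf_eq, mem_iInter, mem_preimage]
    refine forall_congr' fun i => ?_
    cases hsi : s i <;> simp [hsi]
  rw [this]
  exact MeasurableSet.iInter fun i =>
    (hT.iterate (i : ℕ)) (by split <;> [exact hE; exact hE.compl])

lemma cyl_subset_restrict {n n' : ℕ} (h : n ≤ n') (s' : Fin n' → Bool) :
    cyl T E n' s' ⊆ cyl T E n (fun i => s' ⟨i, lt_of_lt_of_le i.isLt h⟩) := by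
  intro x hx
  rw [mem_cyl_iff] at hx ⊢
  intro i
  exact hx ⟨i, lt_of_lt_of_le i.isLt h⟩

lemma nm_iterate (x : X) (d t : ℕ) : nm T E (T^[d] x) t = nm T E x (t + d) := by
  unfold nm
  rw [Function.iterate_add_apply]

lemma mem_preimage_iter_cyl {x : X} {n d : ℕ} {s : Fin n → Bool} :
    T^[d] x ∈ cyl T E n s ↔ ∀ t : Fin n, nm T E x ((t : ℕ) + d) = s t := by
  rw [mem_cyl_iff]
  refine forall_congr' fun t => ?_
  rw [nm_iterate]

/-- Separation: if `d` is less than the minimal period of `x`'s `n`-name, no point can be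
in the cylinder of that name together with its `d`-th iterate. -/
lemma sep_of_minper (x : X) (n d : ℕ) (h1 : 1 ≤ d) (hd : d < minper (nm T E x) n)
    (y : X) (hy : y ∈ cyl T E n (fun i => nm T E x i))
    (hy' : T^[d] y ∈ cyl T E n (fun i => nm T E x i)) : False := by
  refine not_per_of_lt_minper h1 hd ?_
  intro t ht
  have h2 := (mem_preimage_iter_cyl T E).1 hy' ⟨t, by omega⟩
  have h3 := (mem_cyl_iff T E).1 hy ⟨t + d, ht⟩
  exact h3.symm.trans h2

variable {T} in
lemma mul_meas_cyl_le (hT : MeasurePreserving T μ μ) (hE : MeasurableSet E)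
    (n q L : ℕ) (hq : 1 ≤ q) (s : Fin n → Bool)
    (hsep : ∀ (y : X) (d : ℕ), 1 ≤ d → d < q →
      y ∈ cyl T E n s → T^[d] y ∈ cyl T E n s → False) :
    (L : ℝ≥0∞) * μ (cyl T E n s) ≤ (((L - 1) / q + 1 : ℕ) : ℝ≥0∞) := by
  classical
  set B := cyl T E n s with hB
  have hBm : MeasurableSet B := cyl_measurable T E hT.measurable hE n s
  set C : ℕ → Set X := fun i => (T^[i]) ⁻¹' B with hC
  have hCm : ∀ i, MeasurableSet (C i) := fun i => (hT.measurable.iterate i) hBm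
  have hCμ : ∀ i, μ (C i) = μ B := fun i =>
    (hT.iterate i).measure_preimage hBm.nullMeasurableSet
  have hsum : (L : ℝ≥0∞) * μ B = ∑ i ∈ Finset.range L, μ (C i) := by
    rw [Finset.sum_congr rfl (fun i _ => hCμ i), Finset.sum_const, Finset.card_range,
      nsmul_eq_mul]
  rw [hsum]
  have hind : ∀ i, μ (C i) = ∫⁻ x, (C i).indicator (fun _ => (1 : ℝ≥0∞)) x ∂μ := by
    intro i
    exact (lintegral_indicator_one (hCm i)).symm
  calc ∑ i ∈ Finset.range L, μ (C i)
      = ∫⁻ x, ∑ i ∈ Finset.range L, (C i).indicator (fun _ => (1:ℝ≥0∞)) x ∂μ := by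
        rw [lintegral_finset_sum]
        · exact Finset.sum_congr rfl fun i _ => hind i
        · exact fun i _ => (measurable_const.indicator (hCm i))
    _ ≤ ∫⁻ _, (((L - 1) / q + 1 : ℕ) : ℝ≥0∞) ∂μ := by
        refine lintegral_mono fun x => ?_
        -- pointwise count
        have hcount : ∑ i ∈ Finset.range L, (C i).indicator (fun _ => (1:ℝ≥0∞)) x
            = (((Finset.range L).filter (fun i => x ∈ C i)).card : ℝ≥0∞) := by
          rw [← Finset.sum_boole]
          refine Finset.sum_congr rfl fun i _ => ?_
          by_cases h : x ∈ C i <;> simp [h]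
        rw [hcount]
        have hsepF : ∀ i ∈ (Finset.range L).filter (fun i => x ∈ C i),
            ∀ i' ∈ (Finset.range L).filter (fun i => x ∈ C i), i < i' → i + q ≤ i' := by
          intro i hi i' hi' hlt
          by_contra hcon
          push_neg at hcon
          simp only [Finset.mem_filter, Finset.mem_range] at hi hi'
          set d := i' - i with hd
          refine hsep (T^[i] x) d (by omega) (by omega) hi.2 ?_
          have : T^[d] (T^[i] x) = T^[i'] x := by
            rw [← Function.iterate_add_apply]
            congr 1
            omega
          rw [this]
          exact hi'.2
        have hcard : ((Finset.range L).filter (fun i => x ∈ C i)).card ≤ (L - 1) / q + 1 := by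
          set F := (Finset.range L).filter (fun i => x ∈ C i) with hF
          have hinj : Set.InjOn (fun i => i / q) F := by
            intro i hi i' hi' heq
            have heq' : i / q = i' / q := heq
            by_contra hne
            rcases Nat.lt_or_ge i i' with hlt | hge
            · have := hsepF i hi i' hi' hlt
              have : i / q + 1 ≤ i' / q := by
                calc i / q + 1 = (i + q) / q := (Nat.add_div_right i hq).symm
                _ ≤ i' / q := Nat.div_le_div_right this
              omega
            · have hlt : i' < i := by omega
              have := hsepF i' hi' i hi hlt
              have : i' / q + 1 ≤ i / q := by
                calc i' / q + 1 = (i' + q) / q := (Nat.add_div_right i' hq).symm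
                _ ≤ i / q := Nat.div_le_div_right this
              omega
          have hmaps : ∀ i ∈ F, i / q ∈ Finset.range ((L - 1) / q + 1) := by
            intro i hi
            simp only [hF, Finset.mem_filter, Finset.mem_range] at hi
            simp only [Finset.mem_range]
            have : i / q ≤ (L - 1) / q := Nat.div_le_div_right (by omega)
            omega
          calc F.card ≤ (Finset.range ((L-1)/q + 1)).card :=
              Finset.card_le_card_of_injOn _ hmaps hinj
            _ = (L - 1) / q + 1 := Finset.card_range _
        exact Nat.mono_cast hcard
    _ = (((L - 1) / q + 1 : ℕ) : ℝ≥0∞) := by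
        rw [lintegral_const, measure_univ, mul_one]

variable {T} in
lemma atom_bound (hT : MeasurePreserving T μ μ) (hE : MeasurableSet E)
    (x : X) (j : ℕ) (hbig : 2 ^ j ≤ 8 * minper (nm T E x) (2 ^ j)) :
    μ (cyl T E (2 ^ j) (fun i => nm T E x i)) ≤ 16 / (2 : ℝ≥0∞) ^ j := by
  set q := minper (nm T E x) (2 ^ j) with hq
  have hq1 : 1 ≤ q := minper_pos _ _
  have hcount := mul_meas_cyl_le μ E hT hE (2 ^ j) q (2 ^ j) hq1
    (fun i => nm T E x i)
    (fun y d h1 h2 hy hy' => sep_of_minper T E x (2 ^ j) d h1 h2 y hy hy')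
  have hnat : (2 ^ j - 1) / q + 1 ≤ 9 := by
    have h1 : (2 ^ j - 1) / q ≤ 8 := by
      calc (2 ^ j - 1) / q ≤ (8 * q) / q := Nat.div_le_div_right (by omega)
        _ = 8 := Nat.mul_div_cancel 8 (by omega)
    omega
  have h9 : ((2:ℝ≥0∞) ^ j) * μ (cyl T E (2 ^ j) (fun i => nm T E x i)) ≤ 9 := by
    calc ((2:ℝ≥0∞) ^ j) * μ (cyl T E (2 ^ j) (fun i => nm T E x i))
        = (((2 ^ j : ℕ) : ℝ≥0∞)) * μ (cyl T E (2 ^ j) (fun i => nm T E x i)) := by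
          push_cast; ring_nf
      _ ≤ (((2 ^ j - 1) / q + 1 : ℕ) : ℝ≥0∞) := hcount
      _ ≤ (9 : ℕ) := by exact_mod_cast hnat
      _ = (9 : ℝ≥0∞) := by norm_num
  rw [ENNReal.le_div_iff_mul_le (Or.inl (by positivity)) (Or.inl (by simp))]
  calc μ (cyl T E (2 ^ j) (fun i => nm T E x i)) * (2:ℝ≥0∞) ^ j
      = (2:ℝ≥0∞) ^ j * μ (cyl T E (2 ^ j) (fun i => nm T E x i)) := by ring
    _ ≤ 9 := h9
    _ ≤ 16 := by norm_num

/-- union of thin cylinders at scale `2^j`. -/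
def A (j : ℕ) : Set X :=
  ⋃ s ∈ {s : Fin (2 ^ j) → Bool | μ (cyl T E (2 ^ j) s) ≤ 16 / (2:ℝ≥0∞) ^ j},
    cyl T E (2 ^ j) s

lemma A_measurable (hTm : Measurable T) (hE : MeasurableSet E) (j : ℕ) :
    MeasurableSet (A μ T E j) :=
  MeasurableSet.biUnion (Set.to_countable _)
    (fun s _ => cyl_measurable T E hTm hE _ s)

lemma mem_A (hT : MeasurePreserving T μ μ) (hE : MeasurableSet E) (x : X) (j : ℕ)
    (hbig : 2 ^ j ≤ 8 * minper (nm T E x) (2 ^ j)) : x ∈ A μ T E j := by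
  refine mem_biUnion ?_ (mem_cyl_self T E x (2 ^ j))
  exact atom_bound μ E hT hE x j hbig

lemma thin_of_meets {j n' : ℕ} (hn : 2 ^ j ≤ n') (s : Fin n' → Bool)
    (hmeet : (cyl T E n' s ∩ A μ T E j).Nonempty) :
    μ (cyl T E n' s) ≤ 16 / (2:ℝ≥0∞) ^ j := by
  obtain ⟨x', hx1, hx2⟩ := hmeet
  simp only [A, mem_iUnion, mem_setOf_eq, exists_prop] at hx2
  obtain ⟨t, ht, hxt⟩ := hx2
  have hres : x' ∈ cyl T E (2 ^ j) (fun i => s ⟨i, lt_of_lt_of_le i.isLt hn⟩) :=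
    cyl_subset_restrict T E hn s hx1
  have hteq : t = fun i : Fin (2 ^ j) => s ⟨i, lt_of_lt_of_le i.isLt hn⟩ := by
    funext i
    rw [name_eq_of_mem T E hxt i, name_eq_of_mem T E hres i]
  calc μ (cyl T E n' s)
      ≤ μ (cyl T E (2 ^ j) (fun i => s ⟨i, lt_of_lt_of_le i.isLt hn⟩)) :=
        measure_mono (cyl_subset_restrict T E hn s)
    _ = μ (cyl T E (2 ^ j) t) := by rw [hteq]
    _ ≤ 16 / (2:ℝ≥0∞) ^ j := ht

/-- points whose name is `p`-periodic. -/
def D (T : X → X) (E : Set X) (p : ℕ) : Set X :=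
  {x | ∀ i, nm T E x (i + p) = nm T E x i}

lemma nm_mod {T : X → X} {E : Set X} {x : X} {p : ℕ} (hp : 1 ≤ p)
    (hx : x ∈ D T E p) (i : ℕ) : nm T E x i = nm T E x (i % p) := by
  induction i using Nat.strong_induction_on with
  | _ i ih =>
    rcases Nat.lt_or_ge i p with h | h
    · rw [Nat.mod_eq_of_lt h]
    · obtain ⟨a, rfl⟩ : ∃ a, i = a + p := ⟨i - p, by omega⟩
      rw [hx a, ih a (by omega), Nat.add_mod_right]

lemma D_null (hT : MeasurePreserving T μ μ) (hE : MeasurableSet E)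
    (hmax : Tendsto (fun n => ⨆ s : Fin n → Bool, μ (cyl T E n s)) atTop (nhds 0))
    {p : ℕ} (hp : 1 ≤ p) : μ (D T E p) = 0 := by
  have hbound : ∀ n : ℕ, μ (D T E p) ≤ (2 ^ p : ℕ) * ⨆ s : Fin n → Bool, μ (cyl T E n s) := by
    intro n
    have hsub : D T E p ⊆ ⋃ v : Fin p → Bool,
        cyl T E n (fun i => v ⟨(i : ℕ) % p, Nat.mod_lt _ hp⟩) := by
      intro x hx
      refine mem_iUnion.2 ⟨fun t => nm T E x t, ?_⟩
      rw [mem_cyl_iff]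
      intro i
      show nm T E x i = nm T E x ((i : ℕ) % p)
      exact nm_mod hp hx i
    calc μ (D T E p) ≤ μ (⋃ v : Fin p → Bool,
          cyl T E n (fun i => v ⟨(i : ℕ) % p, Nat.mod_lt _ hp⟩)) := measure_mono hsub
      _ ≤ ∑ v : Fin p → Bool, μ (cyl T E n (fun i => v ⟨(i : ℕ) % p, Nat.mod_lt _ hp⟩)) :=
          measure_iUnion_fintype_le _ _
      _ ≤ ∑ _v : Fin p → Bool, ⨆ s : Fin n → Bool, μ (cyl T E n s) :=
          Finset.sum_le_sum (fun v _ => le_iSup (fun s => μ (cyl T E n s)) _)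
      _ = (2 ^ p : ℕ) * ⨆ s : Fin n → Bool, μ (cyl T E n s) := by
          rw [Finset.sum_const, Finset.card_univ, Fintype.card_fun]
          simp [nsmul_eq_mul]
  have hlim : Tendsto (fun n => ((2 ^ p : ℕ) : ℝ≥0∞) * ⨆ s : Fin n → Bool, μ (cyl T E n s))
      atTop (nhds 0) := by
    have := ENNReal.Tendsto.const_mul (a := ((2 ^ p : ℕ) : ℝ≥0∞)) hmax
      (Or.inr (ENNReal.natCast_ne_top _))
    simpa using this
  have := ge_of_tendsto' hlim hbound
  simpa using this

/-- lower bound for `gm` on thin values. -/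
lemma gm_ge_of_thin (m j : ℕ) (hj : 4 ≤ j) {β : ℝ} (hβ0 : 0 ≤ β)
    (hβ : β ≤ 16 / (2:ℝ) ^ j) :
    β * (hlog^[m + 1] ((j : ℝ) - 4)) ≤ gm m β := by
  rcases eq_or_lt_of_le hβ0 with h0 | h0
  · simp [gm, ← h0]
  · have hne : β ≠ 0 := ne_of_gt h0
    rw [gm]
    simp only [hne, if_false]
    have hlogβ : Real.logb 2 β ≤ 4 - (j : ℝ) := by
      have h1 : Real.logb 2 β ≤ Real.logb 2 (16 / (2:ℝ) ^ j) :=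
        Real.logb_le_logb_of_le (by norm_num) h0 hβ
      have h2 : Real.logb 2 (16 / (2:ℝ) ^ j) = 4 - (j : ℝ) := by
        rw [Real.logb_div (by norm_num) (by positivity)]
        rw [show (16:ℝ) = (2:ℝ) ^ (4:ℕ) by norm_num, logb_two_pow, logb_two_pow]
        norm_num
      linarith
    have hj4 : (0:ℝ) ≤ (j:ℝ) - 4 := by
      have : (4:ℝ) ≤ (j:ℝ) := by exact_mod_cast hj
      linarith
    have := hiter_mono (m + 1) hj4 (by linarith : (j:ℝ) - 4 ≤ -Real.logb 2 β)
    exact mul_le_mul_of_nonneg_left this (le_of_lt h0)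

lemma gm_nonneg (m : ℕ) {β : ℝ} (h0 : 0 ≤ β) (h1 : β ≤ 1) : 0 ≤ gm m β := by
  rcases eq_or_lt_of_le h0 with h | h
  · simp [gm, ← h]
  · rw [gm]
    simp only [ne_of_gt h, if_false]
    refine mul_nonneg (le_of_lt h) (hiter_nonneg (m + 1) ?_)
    have := Real.logb_nonpos (b := 2) (by norm_num) (le_of_lt h) h1
    linarith

def jk (m k : ℕ) : ℕ := E2 (m + 1) (2 ^ k)

/-- block union of thin sets -/
def Sk (m k : ℕ) : Set X :=
  ⋃ j ∈ Finset.Ico (jk m k) (jk m (k + 1)), A μ T E j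

lemma jk_lt (m k : ℕ) : jk m k < jk m (k + 1) := by
  have : ∀ t, StrictMono (E2 t) := by
    intro t
    induction t with
    | zero => exact fun a b h => h
    | succ t ih => exact fun a b h => Nat.pow_lt_pow_right (by norm_num) (ih h)
  exact this (m + 1) (Nat.pow_lt_pow_right (by norm_num) (Nat.lt_succ_self k))

lemma jk_ge (m k : ℕ) : 2 ^ k ≤ jk m k := E2_ge _ _

lemma Sk_measurable (hTm : Measurable T) (hE : MeasurableSet E) (m k : ℕ) :
    MeasurableSet (Sk μ T E m k) := by
  refine MeasurableSet.biUnion (Finset.countable_toSet _) (fun j _ => ?_)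
  exact MeasurableSet.biUnion (Set.to_countable _)
    (fun s _ => cyl_measurable T E hTm hE _ s)

/-- Main lower bound for the entropy at block scales. -/
lemma binEnt_lb (hT : MeasurePreserving T μ μ) (hE : MeasurableSet E)
    (m k : ℕ) (hk : 2 ≤ k) :
    (μ (Sk μ T E m k)).toReal * ((2:ℝ) ^ k - 4)
      ≤ binEnt μ T (gm m) E (2 ^ (jk m (k + 1))) := by
  classical
  set nn := 2 ^ (jk m (k + 1)) with hnn
  set F : ℝ := hlog^[m + 1] ((jk m k : ℝ) - 4) with hF
  have hjk4 : 4 ≤ jk m k := le_trans (by norm_num : 4 ≤ 2 ^ 2)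
    (le_trans (Nat.pow_le_pow_right (by norm_num) hk) (jk_ge m k))
  have hF_lb : (2:ℝ) ^ k - 4 ≤ F := by
    have := hiter_lb (m + 1) (2 ^ k) (by
      calc 4 = 2 ^ 2 := by norm_num
      _ ≤ 2 ^ k := Nat.pow_le_pow_right (by norm_num) hk)
    rw [hF]
    unfold jk
    calc (2:ℝ) ^ k - 4 = ((2 ^ k : ℕ) : ℝ) - 4 := by push_cast; ring
      _ ≤ _ := this
  have hF0 : 0 ≤ F := by
    refine hiter_nonneg (m + 1) ?_
    have : (4:ℝ) ≤ (jk m k : ℝ) := by exact_mod_cast hjk4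
    linarith
  set 𝒯 : Finset (Fin nn → Bool) :=
    Finset.univ.filter (fun s => (cyl T E nn s ∩ Sk μ T E m k).Nonempty) with h𝒯
  -- each cylinder meeting `Sk` is thin
  have hthin : ∀ s ∈ 𝒯, μ (cyl T E nn s) ≤ 16 / (2:ℝ≥0∞) ^ (jk m k) := by
    intro s hs
    rw [h𝒯, Finset.mem_filter] at hs
    obtain ⟨x', hx1, hx2⟩ := hs.2
    rw [Sk, Set.mem_iUnion] at hx2
    obtain ⟨j, hj⟩ := hx2
    rw [Set.mem_iUnion] at hj
    obtain ⟨hjIco, hxA⟩ := hj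
    rw [Finset.mem_Ico] at hjIco
    have h2j : 2 ^ j ≤ nn := by
      rw [hnn]
      exact Nat.pow_le_pow_right (by norm_num) (le_of_lt hjIco.2)
    have := thin_of_meets μ T E h2j s ⟨x', hx1, hxA⟩
    calc μ (cyl T E nn s) ≤ 16 / (2:ℝ≥0∞) ^ j := this
      _ ≤ 16 / (2:ℝ≥0∞) ^ (jk m k) := by
          refine ENNReal.div_le_div (le_refl _) ?_
          exact pow_le_pow_right' (by norm_num) hjIco.1
  -- cover Sk by the cylinders in 𝒯
  have hcover : μ (Sk μ T E m k) ≤ ∑ s ∈ 𝒯, μ (cyl T E nn s) := by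
    refine le_trans (measure_mono ?_) (measure_biUnion_finset_le 𝒯 _)
    intro x hx
    have hmem : (fun i : Fin nn => nm T E x (i : ℕ)) ∈ 𝒯 := by
      rw [h𝒯, Finset.mem_filter]
      exact ⟨Finset.mem_univ _, ⟨x, mem_cyl_self T E x nn, hx⟩⟩
    exact Set.mem_biUnion hmem (mem_cyl_self T E x nn)
  have hne_top : ∀ s ∈ 𝒯, μ (cyl T E nn s) ≠ ⊤ := fun s _ => measure_ne_top μ _
  have hsum_le : (μ (Sk μ T E m k)).toReal ≤ ∑ s ∈ 𝒯, (μ (cyl T E nn s)).toReal := by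
    rw [← ENNReal.toReal_sum hne_top]
    exact ENNReal.toReal_mono (ENNReal.sum_lt_top.2 (fun s hs => (hne_top s hs).lt_top)).ne
      hcover
  -- pointwise lower bound on gm
  have hβthin : ∀ s ∈ 𝒯, (μ (cyl T E nn s)).toReal ≤ 16 / (2:ℝ) ^ (jk m k) := by
    intro s hs
    have h1 := hthin s hs
    have h2 : ((16 / (2:ℝ≥0∞) ^ (jk m k))).toReal = 16 / (2:ℝ) ^ (jk m k) := by
      rw [ENNReal.toReal_div]
      norm_num
    rw [← h2]
    exact ENNReal.toReal_mono (by
      refine (ENNReal.div_lt_top (by norm_num) ?_).ne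
      positivity) h1
  have hterm : ∀ s ∈ 𝒯, (μ (cyl T E nn s)).toReal * F ≤ gm m ((μ (cyl T E nn s)).toReal) :=
    fun s hs => gm_ge_of_thin m (jk m k) hjk4 ENNReal.toReal_nonneg (hβthin s hs)
  have hμ1 : ∀ s : Fin nn → Bool, (μ (cyl T E nn s)).toReal ≤ 1 := by
    intro s
    rw [show (1:ℝ) = (1:ℝ≥0∞).toReal by simp]
    exact ENNReal.toReal_mono (by simp) (prob_le_one)
  calc (μ (Sk μ T E m k)).toReal * ((2:ℝ) ^ k - 4)
      ≤ (μ (Sk μ T E m k)).toReal * F := by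
        rcases le_or_gt ((2:ℝ)^k - 4) F with h | h
        · exact mul_le_mul_of_nonneg_left hF_lb ENNReal.toReal_nonneg
        · linarith [hF_lb]
    _ ≤ (∑ s ∈ 𝒯, (μ (cyl T E nn s)).toReal) * F :=
        mul_le_mul_of_nonneg_right hsum_le hF0
    _ = ∑ s ∈ 𝒯, (μ (cyl T E nn s)).toReal * F := by rw [Finset.sum_mul]
    _ ≤ ∑ s ∈ 𝒯, gm m ((μ (cyl T E nn s)).toReal) := Finset.sum_le_sum hterm
    _ ≤ ∑ s : Fin nn → Bool, gm m ((μ (cyl T E nn s)).toReal) := by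
        refine Finset.sum_le_sum_of_subset_of_nonneg (Finset.subset_univ _) ?_
        intro s _ _
        exact gm_nonneg m ENNReal.toReal_nonneg (hμ1 s)
    _ = binEnt μ T (gm m) E nn := rfl

lemma exists_Sk (m : ℕ) (x : X) (hx : ∀ J, ∃ j, J ≤ j ∧ x ∈ A μ T E j) (K : ℕ) :
    ∃ k, K ≤ k ∧ x ∈ Sk μ T E m k := by
  classical
  obtain ⟨j, hjJ, hjA⟩ := hx (jk m K)
  have hKj : K ≤ j :=
    le_trans (le_trans (Nat.le_of_lt (Nat.lt_two_pow_self (n := K))) (jk_ge m K)) hjJ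
  have hPK : jk m K ≤ j := hjJ
  set k := Nat.findGreatest (fun k => jk m k ≤ j) j with hk
  have hk1 : K ≤ k := Nat.le_findGreatest (P := fun a => jk m a ≤ j) hKj hPK
  have hk2 : jk m k ≤ j := Nat.findGreatest_spec (P := fun a => jk m a ≤ j) hKj hPK
  have hk3 : j < jk m (k + 1) := by
    by_contra hcon
    push_neg at hcon
    have hk1j : k + 1 ≤ j :=
      le_trans (le_trans (Nat.le_of_lt (Nat.lt_two_pow_self (n := k+1))) (jk_ge m (k+1))) hcon
    have := Nat.le_findGreatest (P := fun a => jk m a ≤ j) hk1j hcon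
    omega
  exact ⟨k, hk1, Set.mem_biUnion (Finset.mem_Ico.mpr ⟨hk2, hk3⟩) hjA⟩

lemma A_infinite (hT : MeasurePreserving T μ μ) (hE : MeasurableSet E)
    (x : X) (hx : x ∉ ⋃ p : ℕ, D T E (p + 1)) (J : ℕ) :
    ∃ j, J ≤ j ∧ x ∈ A μ T E j := by
  by_contra hcon
  push_neg at hcon
  have hsmall : ∀ j, J ≤ j → 8 * minper (nm T E x) (2 ^ j) < 2 ^ j := by
    intro j hj
    by_contra h
    push_neg at h
    exact (hcon j hj) (mem_A μ T E hT hE x j h)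
  obtain ⟨p, hp1, hper⟩ := periodic_of_small (nm T E x) J hsmall
  refine hx (Set.mem_iUnion.2 ⟨p - 1, ?_⟩)
  have hpp : p - 1 + 1 = p := by omega
  rw [hpp]
  exact hper


end MeasPart


lemma integral_inv_sq {a b : ℝ} (ha : 0 < a) (hab : a ≤ b) :
    ∫ x in Set.Ioc a b, (x ^ 2)⁻¹ = a⁻¹ - b⁻¹ := by
  have hIoc : ∫ x in Set.Ioc a b, (x ^ 2)⁻¹ = ∫ x in a..b, (x ^ 2)⁻¹ :=
    (intervalIntegral.integral_of_le hab).symm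
  rw [hIoc]
  have hder : ∀ x ∈ Set.uIcc a b, HasDerivAt (fun y : ℝ => -y⁻¹) ((x ^ 2)⁻¹) x := by
    intro x hx
    rw [Set.uIcc_of_le hab] at hx
    have hx0 : x ≠ 0 := by
      have := hx.1
      intro h
      rw [h] at this
      linarith
    have h := (hasDerivAt_inv hx0).neg; rw [neg_neg] at h; exact h
  have hint : IntervalIntegrable (fun x : ℝ => (x ^ 2)⁻¹) volume a b := by
    refine ContinuousOn.intervalIntegrable ?_
    refine ContinuousOn.inv₀ (continuous_pow 2).continuousOn ?_
    intro x hx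
    rw [Set.uIcc_of_le hab] at hx
    have : 0 < x := lt_of_lt_of_le ha hx.1
    positivity
  rw [intervalIntegral.integral_eq_sub_of_hasDerivAt hder hint]
  ring

lemma phi_summable (φ : ℝ → ℝ)
    (hφpos : ∀ x : ℝ, 0 ≤ x → 0 < φ x)
    (hφmono : MonotoneOn φ (Set.Ici 0))
    (hφint : IntegrableOn (fun x => φ x / x ^ 2) (Set.Ioi 1)) :
    Summable (fun k : ℕ => φ ((2:ℝ) ^ (k + 1)) / (2:ℝ) ^ (k + 1)) := by
  have h2pos : ∀ t : ℕ, (0:ℝ) < 2 ^ t := fun t => by positivity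
  have hIoc_sub : ∀ c : ℝ, 1 ≤ c → ∀ d : ℝ, Set.Ioc c d ⊆ Set.Ioi 1 := by
    intro c hc d x hx
    exact lt_of_le_of_lt hc hx.1 |>.trans_le (le_refl x) |>.trans_le (le_refl x)
  have hint_Ioc : ∀ (c d : ℝ), 1 ≤ c → IntegrableOn (fun x => φ x / x ^ 2) (Set.Ioc c d) :=
    fun c d hc => hφint.mono_set (hIoc_sub c hc d)
  have hnonneg_ae : 0 ≤ᶠ[ae (volume.restrict (Set.Ioi 1))] (fun x => φ x / x ^ 2) := by
    refine (ae_restrict_iff' measurableSet_Ioi).2 (Filter.Eventually.of_forall ?_)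
    intro x hx
    have : (0:ℝ) < x := lt_trans one_pos hx
    exact div_nonneg (hφpos x this.le).le (by positivity)
  -- per-dyadic-block estimate
  have hblock : ∀ k : ℕ, φ ((2:ℝ) ^ (k + 1)) / (2:ℝ) ^ (k + 1)
      ≤ 2 * ∫ x in Set.Ioc ((2:ℝ) ^ (k + 1)) ((2:ℝ) ^ (k + 2)), φ x / x ^ 2 := by
    intro k
    set a := (2:ℝ) ^ (k + 1) with hadef
    set b := (2:ℝ) ^ (k + 2) with hbdef
    have ha1 : (1:ℝ) ≤ a := one_le_pow₀ (by norm_num)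
    have hab : a ≤ b := by
      rw [hadef, hbdef]
      exact pow_le_pow_right₀ (by norm_num) (by omega)
    have hb2a : b = 2 * a := by rw [hadef, hbdef]; ring
    have hcomp : φ a * (a⁻¹ - b⁻¹) ≤ ∫ x in Set.Ioc a b, φ x / x ^ 2 := by
      have hconst_int : IntegrableOn (fun x => φ a * (x ^ 2)⁻¹) (Set.Ioc a b) := by
        refine IntegrableOn.mono_set ?_ Set.Ioc_subset_Icc_self
        refine ContinuousOn.integrableOn_Icc ?_
        refine ContinuousOn.mul continuousOn_const ?_
        refine ContinuousOn.inv₀ (continuous_pow 2).continuousOn ?_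
        intro x hx
        have : 0 < x := lt_of_lt_of_le (lt_of_lt_of_le one_pos ha1) hx.1
        positivity
      have hle : ∀ x ∈ Set.Ioc a b, φ a * (x ^ 2)⁻¹ ≤ φ x / x ^ 2 := by
        intro x hx
        have hxa : a ≤ x := hx.1.le
        have hx0 : (0:ℝ) < x := lt_of_lt_of_le (lt_of_lt_of_le one_pos ha1) hxa
        have hφle : φ a ≤ φ x := hφmono (Set.mem_Ici.2 (by linarith)) (Set.mem_Ici.2 (by linarith)) hxa
        rw [div_eq_mul_inv]
        exact mul_le_mul_of_nonneg_right hφle (by positivity)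
      calc φ a * (a⁻¹ - b⁻¹) = φ a * ∫ x in Set.Ioc a b, (x ^ 2)⁻¹ := by
            rw [integral_inv_sq (lt_of_lt_of_le one_pos ha1) hab]
        _ = ∫ x in Set.Ioc a b, φ a * (x ^ 2)⁻¹ := (MeasureTheory.integral_const_mul _ _).symm
        _ ≤ ∫ x in Set.Ioc a b, φ x / x ^ 2 :=
            setIntegral_mono_on hconst_int (hint_Ioc a b ha1) measurableSet_Ioc hle
    have hval : φ a * (a⁻¹ - b⁻¹) = φ a / a / 2 := by
      rw [hb2a]
      field_simp
      ring
    have ha0 : (0:ℝ) < a := lt_of_lt_of_le one_pos ha1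
    calc φ a / a = 2 * (φ a * (a⁻¹ - b⁻¹)) := by rw [hval]; ring
      _ ≤ 2 * ∫ x in Set.Ioc a b, φ x / x ^ 2 := by linarith [hcomp]
  -- partial sums of block integrals telescope
  have hpartial : ∀ K : ℕ,
      ∑ k ∈ Finset.range K, ∫ x in Set.Ioc ((2:ℝ) ^ (k + 1)) ((2:ℝ) ^ (k + 2)), φ x / x ^ 2
        = ∫ x in Set.Ioc (2:ℝ) ((2:ℝ) ^ (K + 1)), φ x / x ^ 2 := by
    intro K
    induction K with
    | zero => simp
    | succ K ih =>
        rw [Finset.sum_range_succ, ih]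
        have h1 : (1:ℝ) ≤ 2 := by norm_num
        have h2K : (2:ℝ) ≤ (2:ℝ) ^ (K + 1) := by
          calc (2:ℝ) = 2 ^ 1 := by norm_num
          _ ≤ 2 ^ (K + 1) := pow_le_pow_right₀ (by norm_num) (by omega)
        have hKK : (2:ℝ) ^ (K + 1) ≤ (2:ℝ) ^ (K + 2) :=
          pow_le_pow_right₀ (by norm_num) (by omega)
        rw [← setIntegral_union (Set.Ioc_disjoint_Ioc_of_le le_rfl) measurableSet_Ioc
          (hint_Ioc _ _ h1) (hint_Ioc _ _ (le_trans h1 h2K)),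
          Set.Ioc_union_Ioc_eq_Ioc h2K hKK]
  have hbound : ∀ K : ℕ,
      ∑ k ∈ Finset.range K, φ ((2:ℝ) ^ (k + 1)) / (2:ℝ) ^ (k + 1)
        ≤ 2 * ∫ x in Set.Ioi (1:ℝ), φ x / x ^ 2 := by
    intro K
    calc ∑ k ∈ Finset.range K, φ ((2:ℝ) ^ (k + 1)) / (2:ℝ) ^ (k + 1)
        ≤ ∑ k ∈ Finset.range K,
            2 * ∫ x in Set.Ioc ((2:ℝ) ^ (k + 1)) ((2:ℝ) ^ (k + 2)), φ x / x ^ 2 :=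
          Finset.sum_le_sum (fun k _ => hblock k)
      _ = 2 * ∫ x in Set.Ioc (2:ℝ) ((2:ℝ) ^ (K + 1)), φ x / x ^ 2 := by
          rw [← Finset.mul_sum, hpartial K]
      _ ≤ 2 * ∫ x in Set.Ioi (1:ℝ), φ x / x ^ 2 := by
          have hs : Set.Ioc (2:ℝ) ((2:ℝ) ^ (K + 1)) ⊆ Set.Ioi 1 := hIoc_sub 2 (by norm_num) _
          have := setIntegral_mono_set hφint hnonneg_ae (HasSubset.Subset.eventuallyLE hs)
          linarith
  refine summable_of_sum_range_le (fun k => ?_) hbound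
  have : (0:ℝ) < 2 ^ (k + 1) := h2pos (k + 1)
  exact div_nonneg (hφpos _ this.le).le this.le


end SEAux

open SEAux in
/-- For every aperiodic invertible measure-preserving transformation of a standard
probability space, every `m`, every increasing `φ : [0,∞) → (0,∞)` with
`∫₁^∞ φ(x)/x² dx < ∞`, and every binary partition `P` whose join partitions have maximal
atom measure tending to `0`, `limsup H(g_m, Pₙ)/φ(log₂^{(m+2)} n) = ∞`, the `limsup`
being taken over those `n` with `log₂^{(m+2)} n` defined and nonnegative. -/
theorem statement1 {X : Type*} [MeasurableSpace X] [StandardBorelSpace X]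
    (μ : Measure X) [IsProbabilityMeasure μ] (T : X → X)
    (hT : MeasurePreserving T μ μ)
    (hinv : ∃ S : X → X, Measurable S ∧ Function.LeftInverse S T ∧ Function.RightInverse S T)
    (haper : μ {x | ∃ n : ℕ, 1 ≤ n ∧ T^[n] x = x} = 0)
    (m : ℕ) (φ : ℝ → ℝ)
    (hφpos : ∀ x : ℝ, 0 ≤ x → 0 < φ x)
    (hφmono : MonotoneOn φ (Set.Ici 0))
    (hφint : IntegrableOn (fun x => φ x / x ^ 2) (Set.Ioi 1))
    (E : Set X) (hE : MeasurableSet E) (h0 : 0 < μ E) (h1 : μ E < 1)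
    (hmax : Tendsto (fun n => ⨆ s : Fin n → Bool, μ (cyl T E n s)) atTop (nhds 0)) :
    ∀ C : ℝ, ∃ᶠ n : ℕ in atTop,
      0 ≤ iterLog (m + 2) (n : ℝ) ∧
        C ≤ binEnt μ T (gm m) E n / φ (iterLog (m + 2) (n : ℝ)) := by
  classical
  intro C
  set W : Set X := ⋃ p : ℕ, D T E (p + 1) with hW
  have hWnull : μ W = 0 :=
    measure_iUnion_null (fun p => D_null μ T E hT hE hmax (by omega))
  set C' : ℝ := max C 1 with hC'
  have hC'pos : (0:ℝ) < C' := lt_of_lt_of_le one_pos (le_max_right _ _)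
  set c : ℕ → ℝ := fun k => 8 * C' * (φ ((2:ℝ) ^ (k + 1)) / (2:ℝ) ^ (k + 1)) with hc
  have hcnonneg : ∀ k, 0 ≤ c k := by
    intro k
    have h2 : (0:ℝ) < (2:ℝ) ^ (k + 1) := by positivity
    have := (hφpos ((2:ℝ) ^ (k + 1)) h2.le).le
    have : 0 ≤ φ ((2:ℝ) ^ (k + 1)) / (2:ℝ) ^ (k + 1) := div_nonneg this h2.le
    positivity
  have hck : Summable c := by
    have := phi_summable φ hφpos hφmono hφint
    exact this.mul_left _
  -- frequently, the thin part of the space at block k is large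
  have hfreq : ∃ᶠ k in atTop,
      C' * φ ((2:ℝ) ^ (k + 1)) < (μ (Sk μ T E m k)).toReal * ((2:ℝ) ^ k - 4) := by
    by_contra hcon
    rw [Filter.not_frequently] at hcon
    obtain ⟨K₀, hK₀⟩ := Filter.eventually_atTop.1 hcon
    set K : ℕ := max K₀ 3 with hK
    have hSkle : ∀ k, K ≤ k → μ (Sk μ T E m k) ≤ ENNReal.ofReal (c k) := by
      intro k hk
      have h1 : ¬ (C' * φ ((2:ℝ) ^ (k + 1)) < (μ (Sk μ T E m k)).toReal * ((2:ℝ) ^ k - 4)) :=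
        hK₀ k (le_trans (le_max_left _ _) hk)
      push_neg at h1
      have hk3 : 3 ≤ k := le_trans (le_max_right _ _) hk
      have h8 : (8:ℝ) ≤ 2 ^ k := by
        calc (8:ℝ) = 2 ^ 3 := by norm_num
        _ ≤ 2 ^ k := pow_le_pow_right₀ (by norm_num) hk3
      have hpow : (2:ℝ) ^ (k + 1) / 8 ≤ (2:ℝ) ^ k - 4 := by
        have h2 : (2:ℝ) ^ (k + 1) = 2 * 2 ^ k := by ring
        nlinarith
      have hposk : (0:ℝ) < (2:ℝ) ^ k - 4 := by
        have : (0:ℝ) < (2:ℝ) ^ (k + 1) / 8 := by positivity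
        linarith
      have hφk : (0:ℝ) < φ ((2:ℝ) ^ (k + 1)) := hφpos _ (by positivity)
      have htR : (μ (Sk μ T E m k)).toReal ≤ c k := by
        have h2 : (μ (Sk μ T E m k)).toReal ≤ C' * φ ((2:ℝ) ^ (k + 1)) / ((2:ℝ) ^ k - 4) := by
          rw [le_div_iff₀ hposk]
          exact h1
        refine le_trans h2 ?_
        rw [hc]
        rw [div_le_iff₀ hposk]
        have hkp : (0:ℝ) < (2:ℝ) ^ (k + 1) := by positivity
        have key : (2:ℝ) ^ (k + 1) ≤ 8 * ((2:ℝ) ^ k - 4) := by nlinarith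
        calc C' * φ ((2:ℝ) ^ (k + 1))
            = (8 * C' * (φ ((2:ℝ) ^ (k + 1)) / (2:ℝ) ^ (k + 1))) * ((2:ℝ) ^ (k+1) / 8) := by
              field_simp
          _ ≤ (8 * C' * (φ ((2:ℝ) ^ (k + 1)) / (2:ℝ) ^ (k + 1))) * ((2:ℝ) ^ k - 4) := by
              refine mul_le_mul_of_nonneg_left hpow ?_
              have : 0 ≤ φ ((2:ℝ) ^ (k + 1)) / (2:ℝ) ^ (k + 1) := div_nonneg hφk.le hkp.le
              positivity
      exact (ENNReal.le_ofReal_iff_toReal_le (measure_ne_top μ _) (hcnonneg k)).2 htR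
    have hBC : μ (limsup (fun k => Sk μ T E m (K + k)) atTop) = 0 := by
      refine measure_limsup_atTop_eq_zero ?_
      have h1 : ∀ k : ℕ, μ (Sk μ T E m (K + k)) ≤ ENNReal.ofReal (c (K + k)) :=
        fun k => hSkle (K + k) (by omega)
      have h3 : Summable (fun k => c (K + k)) := by
        have := (summable_nat_add_iff (f := c) K).2 hck
        refine this.congr ?_
        intro k
        rw [add_comm]
      have h4 : ∑' k : ℕ, ENNReal.ofReal (c (K + k)) = ENNReal.ofReal (∑' k, c (K + k)) :=
        (ENNReal.ofReal_tsum_of_nonneg (fun k => hcnonneg _) h3).symm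
      have h2 : (∑' k : ℕ, μ (Sk μ T E m (K + k))) ≤ ENNReal.ofReal (∑' k, c (K + k)) := by
        rw [← h4]
        exact ENNReal.tsum_le_tsum h1
      exact (lt_of_le_of_lt h2 ENNReal.ofReal_lt_top).ne
    have hfull : ∀ x, x ∉ W → x ∈ limsup (fun k => Sk μ T E m (K + k)) atTop := by
      intro x hx
      rw [limsup_eq_iInf_iSup_of_nat]
      simp only [Set.iInf_eq_iInter, Set.iSup_eq_iUnion, Set.mem_iInter, Set.mem_iUnion, exists_prop]
      intro n
      obtain ⟨k, hk1, hk2⟩ := exists_Sk μ T E m x (A_infinite μ T E hT hE x hx) (K + n)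
      refine ⟨k - K, by omega, ?_⟩
      rw [show K + (k - K) = k by omega]
      exact hk2
    have habs : (1:ℝ≥0∞) ≤ 0 := by
      calc (1:ℝ≥0∞) = μ Set.univ := (measure_univ).symm
        _ ≤ μ (limsup (fun k => Sk μ T E m (K + k)) atTop ∪ W) := by
            refine measure_mono ?_
            intro x _
            by_cases hx : x ∈ W
            · exact Set.mem_union_right _ hx
            · exact Set.mem_union_left _ (hfull x hx)
        _ ≤ μ (limsup (fun k => Sk μ T E m (K + k)) atTop) + μ W := measure_union_le _ _
        _ = 0 := by rw [hBC, hWnull, add_zero]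
    exact one_ne_zero (le_antisymm habs zero_le)
  -- conclude
  rw [Filter.frequently_atTop]
  intro N
  obtain ⟨k, hk, hkP⟩ := Filter.frequently_atTop.1 hfreq (max N 2)
  have hk2 : 2 ≤ k := le_trans (le_max_right _ _) hk
  have hkN : N ≤ k := le_trans (le_max_left _ _) hk
  refine ⟨2 ^ (jk m (k + 1)), ?_, ?_, ?_⟩
  · calc N ≤ k := hkN
      _ ≤ 2 ^ (k + 1) := by
          have := Nat.lt_two_pow_self (n := k)
          have h2 : (2:ℕ) ^ k ≤ 2 ^ (k + 1) := Nat.pow_le_pow_right (by norm_num) (by omega)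
          omega
      _ ≤ jk m (k + 1) := E2_ge _ _
      _ ≤ 2 ^ (jk m (k + 1)) := Nat.le_of_lt Nat.lt_two_pow_self
  all_goals {
    have hcalc : iterLog (m + 2) (((2 ^ (jk m (k + 1)) : ℕ) : ℝ)) = ((2 ^ (k+1) : ℕ) : ℝ) := by
      have := iterLog_pow_E2 m (2 ^ (k + 1))
      exact this
    first
    | (rw [hcalc]; positivity)
    | (rw [hcalc]
       have hφarg : ((2 ^ (k+1) : ℕ) : ℝ) = (2:ℝ) ^ (k + 1) := by push_cast; ring
       rw [hφarg]
       have hφpos' : (0:ℝ) < φ ((2:ℝ) ^ (k + 1)) := hφpos _ (by positivity)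
       rw [le_div_iff₀ hφpos']
       have hbE := binEnt_lb μ T E hT hE m k hk2
       calc C * φ ((2:ℝ) ^ (k + 1)) ≤ C' * φ ((2:ℝ) ^ (k + 1)) :=
            mul_le_mul_of_nonneg_right (le_max_left _ _) hφpos'.le
         _ ≤ (μ (Sk μ T E m k)).toReal * ((2:ℝ) ^ k - 4) := hkP.le
         _ ≤ binEnt μ T (gm m) E (2 ^ (jk m (k + 1))) := hbE) }
end

section
/- Let (X,Σ,μ) be a probability space, let g:[0,1]→ℝ be concave with g(0) = lim_{x→0⁺} g(x) = 0, and let P be a finite measurable partition of X containing a set E with 0 < μ(E) < 1. Let g′₋(1/2) denote the left derivative of g at 1/2 (which exists by concavity) and let d_max := sup_{x,y∈[0,1]} |g(x) − g(y)|. Then for every measurable set F ⊆ X, H(g, P) ≥ H_F(g, P) − |g′₋(1/2)| − d_max. -/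
open MeasureTheory Filter Set

lemma aux_slope14 (g : ℝ → ℝ) (hconc : ConcaveOn ℝ (Set.Icc 0 1) g)
    (D : ℝ) (hD : HasDerivWithinAt g D (Set.Iio (1 / 2 : ℝ)) (1 / 2 : ℝ))
    {a b : ℝ} (ha : 0 ≤ a) (hab : a ≤ b) (hb : b ≤ 1 / 2) :
    g a - g b ≤ |D| * (b - a) := by
  rcases eq_or_lt_of_le hab with rfl | hab
  · simp
  have hac : a < 1 / 2 := lt_of_lt_of_le hab hb
  have hAmem : a ∈ Set.Icc (0:ℝ) 1 := ⟨ha, by linarith⟩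
  have hBmem : b ∈ Set.Icc (0:ℝ) 1 := ⟨by linarith, by linarith⟩
  have hCmem : (1/2:ℝ) ∈ Set.Icc (0:ℝ) 1 := ⟨by norm_num, by norm_num⟩
  have hf : ConvexOn ℝ (Set.Icc 0 1) (-g) := hconc.neg
  have e : ∀ u v p q : ℝ, (u - v) / (p - q) = (v - u) / (q - p) := by
    intro u v p q
    rw [← neg_div_neg_eq, neg_sub, neg_sub]
  have key : D ≤ (g b - g a) / (b - a) := by
    have htend : Tendsto (slope g (1/2)) (nhdsWithin (1/2) (Set.Iio (1/2:ℝ) \ {1/2})) (nhds D) :=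
      hasDerivWithinAt_iff_tendsto_slope.mp hD
    rw [Set.diff_singleton_eq_self (by simp)] at htend
    refine le_of_tendsto htend ?_
    filter_upwards [Ioo_mem_nhdsLT_of_mem (Set.mem_Ioc.mpr ⟨hac, le_refl (1/2:ℝ)⟩)] with t ht
    obtain ⟨hat, htc⟩ := ht
    have hTmem : t ∈ Set.Icc (0:ℝ) 1 := ⟨by linarith, by linarith⟩
    have h1 : (-g b - -g a) / (b - a) ≤ (-g (1/2) - -g a) / (1/2 - a) := by
      have := hf.secant_mono hAmem hBmem hCmem (ne_of_gt hab) (ne_of_gt hac) hb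
      simpa using this
    have h2 : (-g a - -g (1/2)) / (a - 1/2) ≤ (-g t - -g (1/2)) / (t - 1/2) := by
      have := hf.secant_mono hCmem hAmem hTmem (ne_of_lt hac) (ne_of_lt htc) (le_of_lt hat)
      simpa using this
    rw [e (-g a) (-g (1/2)) a (1/2), e (-g t) (-g (1/2)) t (1/2)] at h2
    have hchain : (g a - g b) / (b - a) ≤ (g t - g (1/2)) / (1/2 - t) := by
      have e1 : (-g b - -g a) / (b - a) = (g a - g b) / (b - a) := by ring_nf
      have e2 : (-g (1/2) - -g a) / (1/2 - a) = (g a - g (1/2)) / (1/2 - a) := by ring_nf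
      have e3 : (-g (1/2) - -g t) / (1/2 - t) = (g t - g (1/2)) / (1/2 - t) := by ring_nf
      rw [e1, e2] at h1
      rw [e2, e3] at h2
      linarith
    have hst : slope g (1/2) t = (g t - g (1/2)) / (t - 1/2) := slope_def_field g (1/2) t
    rw [hst, e (g t) (g (1/2)) t (1/2)]
    have hneg : -((g b - g a) / (b - a)) ≤ -((g (1/2) - g t) / (1/2 - t)) := by
      rw [← neg_div, ← neg_div, neg_sub, neg_sub]
      exact hchain
    linarith
  have hba0 : (0:ℝ) < b - a := by linarith
  have h4 : D * (b - a) ≤ g b - g a := by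
    rw [le_div_iff₀ hba0] at key
    exact key
  have h3 : (-D) * (b - a) ≤ |D| * (b - a) :=
    mul_le_mul_of_nonneg_right (neg_le_abs D) (le_of_lt hba0)
  rw [neg_mul] at h3
  linarith

lemma aux_bdd14 (g : ℝ → ℝ) (hconc : ConcaveOn ℝ (Set.Icc 0 1) g) :
    BddAbove {d : ℝ | ∃ x ∈ Set.Icc (0:ℝ) 1, ∃ y ∈ Set.Icc (0:ℝ) 1, d = |g x - g y|} := by
  have mem0 : (0:ℝ) ∈ Set.Icc (0:ℝ) 1 := ⟨le_refl 0, by norm_num⟩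
  have mem1 : (1:ℝ) ∈ Set.Icc (0:ℝ) 1 := ⟨by norm_num, le_refl 1⟩
  have hm1 : min (g 0) (g 1) ≤ g 0 := min_le_left _ _
  have hm2 : min (g 0) (g 1) ≤ g 1 := min_le_right _ _
  have hlow : ∀ z ∈ Set.Icc (0:ℝ) 1, min (g 0) (g 1) ≤ g z := by
    rintro z ⟨hz0, hz1⟩
    have h := hconc.2 mem0 mem1 (by linarith : (0:ℝ) ≤ 1 - z) hz0 (by ring)
    simp only [smul_eq_mul] at h
    have harg : (1 - z) * 0 + z * 1 = z := by ring
    rw [harg] at h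
    nlinarith
  have hup : ∀ z ∈ Set.Icc (0:ℝ) 1, g z ≤ 2 * g (1/2) - min (g 0) (g 1) := by
    rintro z hz
    obtain ⟨hz0, hz1⟩ := hz
    have hz' : (1 - z) ∈ Set.Icc (0:ℝ) 1 := ⟨by linarith, by linarith⟩
    have h := hconc.2 (Set.mem_Icc.mpr ⟨hz0, hz1⟩) hz' (by norm_num : (0:ℝ) ≤ 1/2)
      (by norm_num : (0:ℝ) ≤ 1/2) (by norm_num)
    simp only [smul_eq_mul] at h
    have harg : 1 / 2 * z + 1 / 2 * (1 - z) = 1/2 := by ring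
    rw [harg] at h
    have := hlow (1 - z) hz'
    linarith
  refine ⟨2 * g (1/2) - 2 * min (g 0) (g 1), ?_⟩
  rintro d ⟨x, hx, y, hy, rfl⟩
  have h1 := hlow x hx
  have h2 := hlow y hy
  have h3 := hup x hx
  have h4 := hup y hy
  rw [abs_le]
  constructor <;> linarith

/-- Lemma: for an entropy function `g`, a finite measurable partition `P` (indexed by
`Fin k`) containing a set of measure strictly between `0` and `1`, and any measurable
`F`, one has `H(g,P) ≥ H_F(g,P) − |g′₋(1/2)| − d_max`, where `g′₋(1/2)` is the left
derivative of `g` at `1/2` (which exists by concavity, and is here given as a hypothesis)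
and `d_max = sup_{x,y ∈ [0,1]} |g(x) − g(y)|`. -/
theorem statement14 {X : Type*} [MeasurableSpace X] (μ : Measure X)
    [IsProbabilityMeasure μ]
    (g : ℝ → ℝ) (hconc : ConcaveOn ℝ (Set.Icc 0 1) g) (hg0 : g 0 = 0)
    (hg0' : Tendsto g (nhdsWithin 0 (Set.Ioi 0)) (nhds 0))
    (k : ℕ) (P : Fin k → Set X)
    (hPmeas : ∀ i, MeasurableSet (P i))
    (hPdisj : ∀ i j, i ≠ j → Disjoint (P i) (P j))
    (hPcover : (⋃ i, P i) = Set.univ)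
    (i₀ : Fin k) (hE0 : 0 < μ (P i₀)) (hE1 : μ (P i₀) < 1)
    (D : ℝ) (hD : HasDerivWithinAt g D (Set.Iio (1 / 2 : ℝ)) (1 / 2 : ℝ))
    (F : Set X) (hF : MeasurableSet F) :
    (∑ i, g ((μ (P i ∩ F)).toReal)) - |D| -
        sSup {d : ℝ | ∃ x ∈ Set.Icc (0 : ℝ) 1, ∃ y ∈ Set.Icc (0 : ℝ) 1, d = |g x - g y|} ≤
      ∑ i, g ((μ (P i)).toReal) := by
  classical
  set dmax := sSup {d : ℝ | ∃ x ∈ Set.Icc (0 : ℝ) 1, ∃ y ∈ Set.Icc (0 : ℝ) 1, d = |g x - g y|}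
    with hdmax
  have hbdd := aux_bdd14 g hconc
  have mem0 : (0:ℝ) ∈ Set.Icc (0:ℝ) 1 := ⟨le_refl 0, by norm_num⟩
  have hdpos : 0 ≤ dmax := by
    have h0mem : (0:ℝ) ∈ {d : ℝ | ∃ x ∈ Set.Icc (0:ℝ) 1, ∃ y ∈ Set.Icc (0:ℝ) 1,
        d = |g x - g y|} := ⟨0, mem0, 0, mem0, by simp⟩
    exact le_csSup hbdd h0mem
  -- basic measure facts
  have hb1 : ∀ i, (μ (P i)).toReal ≤ 1 := by
    intro i
    have h := prob_le_one (μ := μ) (s := P i)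
    have := ENNReal.toReal_mono ENNReal.one_ne_top h
    simpa using this
  have ha0 : ∀ i, 0 ≤ (μ (P i ∩ F)).toReal := fun i => ENNReal.toReal_nonneg
  have hab : ∀ i, (μ (P i ∩ F)).toReal ≤ (μ (P i)).toReal := fun i =>
    ENNReal.toReal_mono (measure_ne_top μ _) (measure_mono Set.inter_subset_left)
  have haIcc : ∀ i, (μ (P i ∩ F)).toReal ∈ Set.Icc (0:ℝ) 1 :=
    fun i => ⟨ha0 i, le_trans (hab i) (hb1 i)⟩
  have hbIcc : ∀ i, (μ (P i)).toReal ∈ Set.Icc (0:ℝ) 1 :=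
    fun i => ⟨ENNReal.toReal_nonneg, hb1 i⟩
  have hsum : ∑ i, (μ (P i)).toReal = 1 := by
    have h1 : ∑' i, μ (P i) = 1 := by
      rw [← measure_iUnion (fun i j hij => hPdisj i j hij) hPmeas, hPcover, measure_univ]
    have h2 : ∑ i, μ (P i) = 1 := by rwa [tsum_fintype] at h1
    rw [← ENNReal.toReal_sum (fun i _ => measure_ne_top μ _), h2]
    simp
  suffices h : ∑ i, (g ((μ (P i ∩ F)).toReal) - g ((μ (P i)).toReal)) ≤ |D| + dmax by
    rw [Finset.sum_sub_distrib] at h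
    linarith
  rw [← Finset.sum_filter_add_sum_filter_not Finset.univ (fun i => (μ (P i)).toReal ≤ 1/2)]
  have hB1 : ∑ i ∈ Finset.univ.filter (fun i => (μ (P i)).toReal ≤ 1/2),
      (g ((μ (P i ∩ F)).toReal) - g ((μ (P i)).toReal)) ≤ |D| := by
    calc ∑ i ∈ Finset.univ.filter (fun i => (μ (P i)).toReal ≤ 1/2),
        (g ((μ (P i ∩ F)).toReal) - g ((μ (P i)).toReal))
        ≤ ∑ i ∈ Finset.univ.filter (fun i => (μ (P i)).toReal ≤ 1/2),
          |D| * (μ (P i)).toReal := by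
          refine Finset.sum_le_sum fun i hi => ?_
          have hcond : (μ (P i)).toReal ≤ 1/2 := (Finset.mem_filter.mp hi).2
          have hkey := aux_slope14 g hconc D hD (ha0 i) (hab i) hcond
          have : |D| * ((μ (P i)).toReal - (μ (P i ∩ F)).toReal) ≤ |D| * (μ (P i)).toReal :=
            mul_le_mul_of_nonneg_left (by linarith [ha0 i]) (abs_nonneg D)
          linarith
      _ = |D| * ∑ i ∈ Finset.univ.filter (fun i => (μ (P i)).toReal ≤ 1/2),
          (μ (P i)).toReal := by rw [Finset.mul_sum]
      _ ≤ |D| * 1 := by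
          refine mul_le_mul_of_nonneg_left ?_ (abs_nonneg D)
          rw [← hsum]
          exact Finset.sum_le_sum_of_subset_of_nonneg (Finset.filter_subset _ _)
            (fun i _ _ => ENNReal.toReal_nonneg)
      _ = |D| := mul_one _
  have hB2 : ∑ i ∈ Finset.univ.filter (fun i => ¬ ((μ (P i)).toReal ≤ 1/2)),
      (g ((μ (P i ∩ F)).toReal) - g ((μ (P i)).toReal)) ≤ dmax := by
    rcases (Finset.univ.filter (fun i => ¬ ((μ (P i)).toReal ≤ 1/2))).eq_empty_or_nonempty with
      hT | ⟨i, hi⟩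
    · rw [hT]
      simpa using hdpos
    · have hTeq : Finset.univ.filter (fun i => ¬ ((μ (P i)).toReal ≤ 1/2)) = {i} := by
        refine Finset.Subset.antisymm ?_ (Finset.singleton_subset_iff.mpr hi)
        intro j hj
        rw [Finset.mem_singleton]
        by_contra hne
        have hi2 : 1/2 < (μ (P i)).toReal := by
          have := (Finset.mem_filter.mp hi).2; push_neg at this; exact this
        have hj2 : 1/2 < (μ (P j)).toReal := by
          have := (Finset.mem_filter.mp hj).2; push_neg at this; exact this
        have hd := hPdisj j i hne
        have hle : μ (P j ∪ P i) ≤ 1 := prob_le_one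
        rw [measure_union hd (hPmeas i)] at hle
        have := ENNReal.toReal_mono ENNReal.one_ne_top hle
        rw [ENNReal.toReal_add (measure_ne_top μ _) (measure_ne_top μ _)] at this
        simp only [ENNReal.toReal_one] at this
        linarith
      rw [hTeq, Finset.sum_singleton]
      have hmemS : |g ((μ (P i ∩ F)).toReal) - g ((μ (P i)).toReal)| ∈
          {d : ℝ | ∃ x ∈ Set.Icc (0:ℝ) 1, ∃ y ∈ Set.Icc (0:ℝ) 1, d = |g x - g y|} :=
        ⟨_, haIcc i, _, hbIcc i, rfl⟩
      exact le_trans (le_abs_self _) (le_csSup hbdd hmemS)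
  linarith
end

section
/- Let (X,Σ,μ) be a probability space, let g:[0,1]→ℝ be concave with g(0) = lim_{x→0⁺} g(x) = 0, and let φ_g(x) = g(x)/x for x ∈ (0,1]. Let P be a finite measurable partition of X, F ∈ Σ, and λ ∈ (0,1] be such that μ(B ∩ F) ≤ λ for every B ∈ P. Then H_F(g, P) ≥ φ_g(λ)·μ(F). -/
open MeasureTheory Filter Set

lemma aux_concave_chord {g : ℝ → ℝ} (hconc : ConcaveOn ℝ (Set.Icc 0 1) g)
    (hg0 : g 0 = 0) {lam : ℝ} (hlam0 : 0 < lam) (hlam1 : lam ≤ 1)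
    {x : ℝ} (hx0 : 0 ≤ x) (hxl : x ≤ lam) :
    g lam / lam * x ≤ g x := by
  rcases eq_or_lt_of_le hx0 with h | h
  · simp [← h, hg0]
  · have ht0 : 0 < x / lam := div_pos h hlam0
    have ht1 : x / lam ≤ 1 := (div_le_one hlam0).mpr hxl
    have key := hconc.2 (Set.mem_Icc.mpr ⟨le_refl (0:ℝ), zero_le_one⟩)
      (Set.mem_Icc.mpr ⟨hlam0.le, hlam1⟩)
      (show (0:ℝ) ≤ 1 - x / lam by linarith) ht0.le
      (show (1 - x / lam) + x / lam = 1 by ring)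
    have hxx : (1 - x / lam) • (0 : ℝ) + (x / lam) • lam = x := by
      field_simp
      simp [hlam0.ne']
    rw [hxx] at key
    have : (1 - x / lam) • g 0 + (x / lam) • g lam = g lam / lam * x := by
      rw [hg0]; field_simp; simp only [smul_eq_mul, mul_zero, zero_add]; field_simp
    linarith [this ▸ key]

/-- Lemma: for an entropy function `g` with `φ_g(x) = g(x)/x`, a finite measurable
partition `P` (indexed by `Fin k`), a measurable set `F`, and `λ ∈ (0,1]` with
`μ(B ∩ F) ≤ λ` for every `B ∈ P`, one has `H_F(g,P) ≥ φ_g(λ)·μ(F)`. -/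
theorem statement15 {X : Type*} [MeasurableSpace X] (μ : Measure X)
    [IsProbabilityMeasure μ]
    (g : ℝ → ℝ) (hconc : ConcaveOn ℝ (Set.Icc 0 1) g) (hg0 : g 0 = 0)
    (hg0' : Tendsto g (nhdsWithin 0 (Set.Ioi 0)) (nhds 0))
    (k : ℕ) (P : Fin k → Set X)
    (hPmeas : ∀ i, MeasurableSet (P i))
    (hPdisj : ∀ i j, i ≠ j → Disjoint (P i) (P j))
    (hPcover : (⋃ i, P i) = Set.univ)
    (F : Set X) (hF : MeasurableSet F)
    (lam : ℝ) (hlam0 : 0 < lam) (hlam1 : lam ≤ 1)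
    (hbound : ∀ i, μ (P i ∩ F) ≤ ENNReal.ofReal lam) :
    g lam / lam * (μ F).toReal ≤ ∑ i, g ((μ (P i ∩ F)).toReal) := by
  have hne : ∀ i, μ (P i ∩ F) ≠ ⊤ := fun i => measure_ne_top μ _
  have hcov : (⋃ i, P i ∩ F) = F := by
    rw [← Set.iUnion_inter, hPcover, Set.univ_inter]
  have hsum : μ F = ∑ i, μ (P i ∩ F) := by
    conv_lhs => rw [← hcov]
    rw [measure_iUnion (f := fun i => P i ∩ F)
      (fun i j hij => (hPdisj i j hij).mono Set.inter_subset_left Set.inter_subset_left)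
      (fun i => (hPmeas i).inter hF), tsum_fintype]
  have hsumR : (μ F).toReal = ∑ i, (μ (P i ∩ F)).toReal := by
    rw [hsum, ENNReal.toReal_sum (fun i _ => hne i)]
  rw [hsumR, Finset.mul_sum]
  refine Finset.sum_le_sum fun i _ => ?_
  exact aux_concave_chord hconc hg0 hlam0 hlam1 ENNReal.toReal_nonneg
    (by rw [← ENNReal.toReal_ofReal hlam0.le]
        exact ENNReal.toReal_mono ENNReal.ofReal_ne_top (hbound i))
end

section
/- Let g:[0,1]→ℝ be concave with g(0) = lim_{x→0⁺} g(x) = 0, and suppose g is subderivative, i.e. g(xy) ≤ x·g(y) + y·g(x) for all x,y ∈ [0,1]. If n ≥ 1 and x_1,…,x_n ≥ 0 satisfy Σ_{i=1}^n x_i ≤ 1, then Σ_{i=1}^n g(x_i) ≤ sup_{x∈[0,1]} g(x) + n·g(1/n)·Σ_{i=1}^n x_i. -/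
open Set

lemma aux_bdd16 (g : ℝ → ℝ) (hconc : ConcaveOn ℝ (Set.Icc 0 1) g) (hg0 : g 0 = 0) :
    BddAbove (g '' Set.Icc (0:ℝ) 1) := by
  refine ⟨2 * (|g (1/2)| + |g 1|), ?_⟩
  rintro _ ⟨z, ⟨hz0, hz1⟩, rfl⟩
  have h1 : (1:ℝ) ∈ Set.Icc (0:ℝ) 1 := by constructor <;> norm_num
  have h0 : (0:ℝ) ∈ Set.Icc (0:ℝ) 1 := by constructor <;> norm_num
  have habs1 := abs_nonneg (g (1/2))
  have habs2 := abs_nonneg (g 1)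
  have hle1 := le_abs_self (g (1/2))
  have hle2 := neg_abs_le (g 1)
  rcases le_or_gt z (1/2) with hhalf | hhalf
  · -- use combination of z and 1
    set t : ℝ := 1 / (2 * (1 - z)) with ht
    have hz1' : (0:ℝ) < 1 - z := by linarith
    have ht2 : (1/2 : ℝ) ≤ t := by
      rw [ht, div_le_div_iff₀] <;> nlinarith
    have ht1 : t ≤ 1 := by
      rw [ht, div_le_one (by nlinarith)]; nlinarith
    have hcombo : t * z + (1 - t) * 1 = 1/2 := by
      rw [ht]; field_simp; ring
    have := hconc.2 ⟨hz0, hz1⟩ h1 (by linarith : (0:ℝ) ≤ t) (by linarith : (0:ℝ) ≤ 1 - t) (by ring)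
    simp only [smul_eq_mul, hcombo] at this
    -- t * g z + (1 - t) * g 1 ≤ g (1/2)
    nlinarith [this, mul_le_mul_of_nonneg_left hle1 (le_of_lt (lt_of_lt_of_le one_half_pos ht2))]
  · -- z ≥ 1/2 : combination of 0 and z
    have hzpos : (0:ℝ) < z := by linarith
    set b : ℝ := 1 / (2 * z) with hb
    have hb0 : 0 < b := by positivity
    have hb1 : b ≤ 1 := by rw [hb, div_le_one (by positivity)]; linarith
    have hb2 : (1/2 : ℝ) ≤ b := by rw [hb, div_le_div_iff₀] <;> nlinarith
    have hcombo : b * z = 1/2 := by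
      rw [hb]; field_simp
    have := hconc.2 h0 ⟨hz0, hz1⟩ (by linarith : (0:ℝ) ≤ 1 - b) (le_of_lt hb0) (by ring)
    simp only [smul_eq_mul, hcombo, hg0, mul_zero, zero_add] at this
    -- b * g z ≤ g (1/2)
    nlinarith [this, hle1, habs1, habs2, hb1, hb2]

/-- Lemma: if `g` is a subderivative entropy function and `x₁,…,xₙ ≥ 0` with
`Σ xᵢ ≤ 1`, then `Σ g(xᵢ) ≤ sup_{x∈[0,1]} g(x) + n·g(1/n)·Σ xᵢ`. -/
theorem statement16 (g : ℝ → ℝ) (hconc : ConcaveOn ℝ (Set.Icc 0 1) g) (hg0 : g 0 = 0)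
    (hg0' : Filter.Tendsto g (nhdsWithin 0 (Set.Ioi 0)) (nhds 0))
    (hsub : ∀ x ∈ Set.Icc (0 : ℝ) 1, ∀ y ∈ Set.Icc (0 : ℝ) 1,
      g (x * y) ≤ x * g y + y * g x)
    (n : ℕ) (hn : 1 ≤ n) (x : Fin n → ℝ) (hx : ∀ i, 0 ≤ x i)
    (hsum : ∑ i, x i ≤ 1) :
    ∑ i, g (x i) ≤ sSup (g '' Set.Icc (0 : ℝ) 1) + n * g (1 / n) * ∑ i, x i := by
  have hbdd := aux_bdd16 g hconc hg0
  have hS0 : 0 ≤ ∑ i, x i := Finset.sum_nonneg fun i _ => hx i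
  rcases eq_or_lt_of_le hS0 with h0 | hpos
  · have hall : ∀ i ∈ Finset.univ, x i = 0 :=
      (Finset.sum_eq_zero_iff_of_nonneg (fun i _ => hx i)).1 h0.symm
    have hsupnn : (0:ℝ) ≤ sSup (g '' Set.Icc 0 1) :=
      le_csSup hbdd ⟨0, ⟨le_refl 0, zero_le_one⟩, hg0⟩
    have : ∑ i, g (x i) = 0 := by
      apply Finset.sum_eq_zero
      intro i hi
      rw [hall i hi, hg0]
    rw [this, ← h0]
    simpa using hsupnn
  · set S := ∑ i, x i with hS
    have hSmem : S ∈ Set.Icc (0:ℝ) 1 := ⟨hS0, hsum⟩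
    have hxiS : ∀ i, x i ≤ S := fun i =>
      Finset.single_le_sum (fun j _ => hx j) (Finset.mem_univ i)
    set y : Fin n → ℝ := fun i => x i / S with hy
    have hymem : ∀ i, y i ∈ Set.Icc (0:ℝ) 1 := fun i =>
      ⟨div_nonneg (hx i) hS0, (div_le_one hpos).2 (hxiS i)⟩
    have hsumy : ∑ i, y i = 1 := by
      rw [hy, ← Finset.sum_div, div_self (ne_of_gt hpos)]
    have hn0 : (0:ℝ) < n := by exact_mod_cast hn
    have jensen := hconc.le_map_sum (t := Finset.univ) (w := fun _ => (1/n : ℝ))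
      (p := y) (fun i _ => by positivity)
      (by simp [Finset.sum_const, Finset.card_univ]; field_simp)
      (fun i _ => hymem i)
    simp only [smul_eq_mul] at jensen
    have hsum1n : ∑ i : Fin n, (1/n : ℝ) * y i = 1/n := by
      rw [← Finset.mul_sum, hsumy, mul_one]
    rw [hsum1n, ← Finset.mul_sum] at jensen
    -- jensen : (1/n) * ∑ g (y i) ≤ g (1/n)
    have hJ : ∑ i, g (y i) ≤ n * g (1/n) := by
      calc ∑ i, g (y i) = n * (1/n * ∑ i, g (y i)) := by
            field_simp
        _ ≤ n * g (1/n) := mul_le_mul_of_nonneg_left jensen (le_of_lt hn0)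
    have hsubi : ∀ i, g (x i) ≤ S * g (y i) + y i * g S := by
      intro i
      have hxe : x i = S * y i := by
        rw [hy]; field_simp
      rw [hxe]
      exact hsub S hSmem (y i) (hymem i)
    have hsum2 : ∑ i, g (x i) ≤ S * (∑ i, g (y i)) + g S := by
      calc ∑ i, g (x i) ≤ ∑ i, (S * g (y i) + y i * g S) :=
            Finset.sum_le_sum fun i _ => hsubi i
        _ = S * (∑ i, g (y i)) + (∑ i, y i) * g S := by
            rw [Finset.sum_add_distrib, Finset.mul_sum, ← Finset.sum_mul]
        _ = S * (∑ i, g (y i)) + g S := by rw [hsumy, one_mul]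
    have hgS : g S ≤ sSup (g '' Set.Icc 0 1) := le_csSup hbdd ⟨S, hSmem, rfl⟩
    have hmul : S * (∑ i, g (y i)) ≤ S * (n * g (1/n)) :=
      mul_le_mul_of_nonneg_left hJ hS0
    calc ∑ i, g (x i) ≤ S * (∑ i, g (y i)) + g S := hsum2
      _ ≤ S * (n * g (1/n)) + sSup (g '' Set.Icc 0 1) := add_le_add hmul hgS
      _ = sSup (g '' Set.Icc 0 1) + n * g (1/n) * S := by ring
end

section
/- Let (X,Σ,μ,T) be a measure-preserving system, let E ∈ Σ, let n ≥ 1, and let s ∈ {0,1}^n. Define A_n^E(s) := {x ∈ X : (1_E(x), 1_E(Tx), …, 1_E(T^{n−1}x)) = s}, and let p_n(s) be the period of s, i.e. the least k ∈ {1,…,n−1} such that s_i = s_{i+k} for all 0 ≤ i ≤ n−k−1, with p_n(s) = n if no such k exists. Then μ(A_n^E(s)) ≤ 1/p_n(s). -/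
open MeasureTheory Filter Set

/-- The period `p_n(s)` of a word `s ∈ {0,1}^n`: the least `k ∈ {1,…,n−1}` with
`s_i = s_{i+k}` for all `0 ≤ i ≤ n−k−1`, and `n` if no such `k` exists. -/
noncomputable def wordPeriod (n : ℕ) (s : Fin n → Bool) : ℕ :=
  sInf ({k | 1 ≤ k ∧ k < n ∧ ∀ (i : ℕ) (h : i + k < n),
    s ⟨i, by omega⟩ = s ⟨i + k, h⟩} ∪ {n})

/-- Lemma: for a measure-preserving system `(X,μ,T)`, a measurable set `E`, `n ≥ 1` and a
word `s ∈ {0,1}^n`, one has `μ(A_n^E(s)) ≤ 1/p_n(s)`. -/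
theorem statement17 {X : Type*} [MeasurableSpace X] (μ : Measure X)
    [IsProbabilityMeasure μ] (T : X → X) (hT : MeasurePreserving T μ μ)
    (E : Set X) (hE : MeasurableSet E)
    (n : ℕ) (hn : 1 ≤ n) (s : Fin n → Bool) :
    μ (cyl T E n s) ≤ 1 / (wordPeriod n s : ENNReal) := by
  set A := cyl T E n s with hAdef
  set P := {k | 1 ≤ k ∧ k < n ∧ ∀ (i : ℕ) (h : i + k < n),
    s ⟨i, by omega⟩ = s ⟨i + k, h⟩} ∪ ({n} : Set ℕ) with hPdef
  set p := wordPeriod n s with hpdef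
  have hTm : Measurable T := hT.measurable
  -- measurability of the cylinder
  have hA : MeasurableSet A := by
    have : A = ⋂ i : Fin n, (T^[(i : ℕ)])⁻¹' (if s i then E else Eᶜ) := by
      ext x
      simp only [hAdef, cyl, mem_iInter, mem_preimage, mem_setOf_eq]
      refine forall_congr' fun i => ?_
      cases h : s i <;> simp [h]
    rw [this]
    refine MeasurableSet.iInter fun i => (hTm.iterate _) ?_
    split <;> [exact hE; exact hE.compl]
  -- basic bounds on the period
  have hnP : n ∈ P := by simp [hPdef]
  have hp_le : p ≤ n := Nat.sInf_le hnP
  have hp_pos : 1 ≤ p := by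
    have hmem : p ∈ P := Nat.sInf_mem ⟨n, hnP⟩
    rcases hmem with h | h
    · exact h.1
    · simp only [mem_singleton_iff] at h; omega
  -- disjointness of the preimages
  have hdisj : ∀ a b : ℕ, a < b → b < p →
      Disjoint ((T^[a])⁻¹' A) ((T^[b])⁻¹' A) := by
    intro a b hab hbp
    rw [Set.disjoint_left]
    rintro x hxa hxb
    set j := b - a with hj
    have hj1 : 1 ≤ j := by omega
    have hjp : j < p := by omega
    have hjn : j < n := by omega
    have hkey : ∀ (i : ℕ) (h : i + j < n),
        s ⟨i, by omega⟩ = s ⟨i + j, h⟩ := by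
      intro i h
      have h1 : T^[(i : ℕ)] (T^[a] x) ∈ E ↔ s ⟨i, by omega⟩ = true :=
        hxa ⟨i, by omega⟩
      have h2 : T^[(i : ℕ)] (T^[b] x) ∈ E ↔ s ⟨i, by omega⟩ = true :=
        hxb ⟨i, by omega⟩
      have h3 : T^[(i + j : ℕ)] (T^[a] x) ∈ E ↔ s ⟨i + j, h⟩ = true :=
        hxa ⟨i + j, h⟩
      have heq : T^[(i + j : ℕ)] (T^[a] x) = T^[(i : ℕ)] (T^[b] x) := by
        rw [← Function.iterate_add_apply, ← Function.iterate_add_apply]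
        congr 1
        omega
      rw [heq] at h3
      exact Bool.eq_iff_iff.mpr (h2.symm.trans h3)
    have hjP : j ∈ P := Or.inl ⟨hj1, hjn, hkey⟩
    have h5 : sInf P ≤ j := Nat.sInf_le hjP
    have h6 : sInf P = p := rfl
    omega
  -- measure computation
  have hpre : ∀ j : ℕ, μ ((T^[j])⁻¹' A) = μ A := fun j =>
    (hT.iterate j).measure_preimage hA.nullMeasurableSet
  have hsum : (p : ENNReal) * μ A ≤ 1 := by
    have hunion : μ (⋃ j ∈ Finset.range p, (T^[j])⁻¹' A)
        = ∑ j ∈ Finset.range p, μ ((T^[j])⁻¹' A) := by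
      refine measure_biUnion_finset ?_ fun j _ => (hTm.iterate j) hA
      intro a ha b hb hne
      rcases Nat.lt_or_ge a b with h | h
      · exact hdisj a b h (Finset.mem_range.mp hb)
      · have h' : b < a := lt_of_le_of_ne h (Ne.symm hne)
        exact (hdisj b a h' (Finset.mem_range.mp ha)).symm
    have : ∑ j ∈ Finset.range p, μ ((T^[j])⁻¹' A) = (p : ENNReal) * μ A := by
      simp [hpre, Finset.sum_const]
    calc (p : ENNReal) * μ A = μ (⋃ j ∈ Finset.range p, (T^[j])⁻¹' A) := by
          rw [hunion, this]
      _ ≤ 1 := prob_le_one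
  have hp0 : (p : ENNReal) ≠ 0 := Nat.cast_ne_zero.mpr (by omega)
  rw [ENNReal.le_div_iff_mul_le (Or.inl hp0) (Or.inl (ENNReal.natCast_ne_top p))]
  rwa [mul_comm] at hsum
end
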